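/- Let k be an algebraically closed field of characteristic 2, let a_1,a_2,a_3 ∈ k be pairwise distinct, let c_1,c_2,c_3,d_1,d_2,d_3 ∈ k be all nonzero, and let e_i, f_i ∈ k be the unique square roots of d_i and c_i respectively. In k[X_1,X_2,X_3,Y_1,Y_2,Y_3] set Q_1 = X_1Y_1 + X_2Y_2 + X_3Y_3, Q_2 = Σ_{i=1}^{3}(a_iX_iY_i + c_iX_i² + d_iY_i²), Q_3 = Σ_{i=1}^{3} a_i²X_iY_i, and let Σ ⊆ P^5(k) be their common zero locus. Then: (i) each of the following eight projective lines is contained in Σ: Θ_1 = {X_1=X_2=X_3=0, e_1Y_1+e_2Y_2+e_3Y_3=0}, Θ_2 = {Y_1=Y_2=X_3=0, f_1X_1+f_2X_2+e_3Y_3=0}, Θ_3 = {Y_1=X_2=Y_3=0, f_1X_1+e_2Y_2+f_3X_3=0}, Θ_4 = {X_1=Y_2=Y_3=0, e_1Y_1+f_2X_2+f_3X_3=0}, E_1 = {Y_1=Y_2=Y_3=0, f_1X_1+f_2X_2+f_3X_3=0}, E_2 = {X_1=X_2=Y_3=0, e_1Y_1+e_2Y_2+f_3X_3=0}, E_3 =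 {X_1=Y_2=X_3=0, e_1Y_1+f_2X_2+e_3Y_3=0}, E_4 = {Y_1=X_2=X_3=0, f_1X_1+e_2Y_2+e_3Y_3=0}; and (ii) the singular points of Σ — points of Σ represented by nonzero v ∈ k^6 at which the 3×6 Jacobian matrix of (Q_1,Q_2,Q_3) has rank at most 2 — are exactly the twelve intersection points Θ_i ∩ E_j with i ≠ j. -/

import Mathlib

open MvPolynomial

/-- The Grassmannian quadric `Q₁ = X₁Y₁ + X₂Y₂ + X₃Y₃`; coordinates
`(X₁,X₂,X₃,Y₁,Y₂,Y₃) = (X 0, X 1, X 2, X 3, X 4, X 5)`. -/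
noncomputable def Q1p (k : Type*) [Field k] : MvPolynomial (Fin 6) k :=
  X 0 * X 3 + X 1 * X 4 + X 2 * X 5

/-- The quadric `Q₂ = Σ (aᵢ XᵢYᵢ + cᵢ Xᵢ² + dᵢ Yᵢ²)` of the ordinary case. -/
noncomputable def Q2a (k : Type*) [Field k] (a1 a2 a3 c1 c2 c3 d1 d2 d3 : k) :
    MvPolynomial (Fin 6) k :=
  C a1 * (X 0 * X 3) + C a2 * (X 1 * X 4) + C a3 * (X 2 * X 5)
    + C c1 * X 0 ^ 2 + C c2 * X 1 ^ 2 + C c3 * X 2 ^ 2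
    + C d1 * X 3 ^ 2 + C d2 * X 4 ^ 2 + C d3 * X 5 ^ 2

/-- The quadric `Q₃ = Σ aᵢ² XᵢYᵢ` of the ordinary case. -/
noncomputable def Q3a (k : Type*) [Field k] (a1 a2 a3 : k) :
    MvPolynomial (Fin 6) k :=
  C (a1 ^ 2) * (X 0 * X 3) + C (a2 ^ 2) * (X 1 * X 4) + C (a3 ^ 2) * (X 2 * X 5)

/-- The four lines `Θ̃₁, …, Θ̃₄` (affine cones), with `eᵢ = √dᵢ`, `fᵢ = √cᵢ`. -/
def ThetaSet (k : Type*) [Field k] (e1 e2 e3 f1 f2 f3 : k) :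
    Fin 4 → Set (Fin 6 → k) :=
  ![{v | v 0 = 0 ∧ v 1 = 0 ∧ v 2 = 0 ∧ e1 * v 3 + e2 * v 4 + e3 * v 5 = 0},
    {v | v 3 = 0 ∧ v 4 = 0 ∧ v 2 = 0 ∧ f1 * v 0 + f2 * v 1 + e3 * v 5 = 0},
    {v | v 3 = 0 ∧ v 1 = 0 ∧ v 5 = 0 ∧ f1 * v 0 + e2 * v 4 + f3 * v 2 = 0},
    {v | v 0 = 0 ∧ v 4 = 0 ∧ v 5 = 0 ∧ e1 * v 3 + f2 * v 1 + f3 * v 2 = 0}]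

/-- The four lines `E₁, …, E₄` (affine cones), with `eᵢ = √dᵢ`, `fᵢ = √cᵢ`. -/
def ESet (k : Type*) [Field k] (e1 e2 e3 f1 f2 f3 : k) :
    Fin 4 → Set (Fin 6 → k) :=
  ![{v | v 3 = 0 ∧ v 4 = 0 ∧ v 5 = 0 ∧ f1 * v 0 + f2 * v 1 + f3 * v 2 = 0},
    {v | v 0 = 0 ∧ v 1 = 0 ∧ v 5 = 0 ∧ e1 * v 3 + e2 * v 4 + f3 * v 2 = 0},
    {v | v 0 = 0 ∧ v 4 = 0 ∧ v 2 = 0 ∧ e1 * v 3 + f2 * v 1 + e3 * v 5 = 0},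
    {v | v 3 = 0 ∧ v 1 = 0 ∧ v 2 = 0 ∧ f1 * v 0 + e2 * v 4 + e3 * v 5 = 0}]

section Aux

variable {k : Type*} [Field k]

@[simp] lemma vec6_four {α : Type*} (a b c d e f : α) : ![a,b,c,d,e,f] 4 = e := rfl
@[simp] lemma vec6_five {α : Type*} (a b c d e f : α) : ![a,b,c,d,e,f] 5 = f := rfl

/-- Jacobian matrix (explicit form) of (Q1,Q2,Q3) at v, in char 2. -/
def Jmat (a1 a2 a3 : k) (v : Fin 6 → k) : Matrix (Fin 3) (Fin 6) k :=
  Matrix.of fun i j => ![a1, a2, a3, a1, a2, a3] j ^ (i : ℕ) * ![v 3, v 4, v 5, v 0, v 1, v 2] j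

set_option maxHeartbeats 2000000 in
lemma jac_eq (k : Type*) [Field k] [CharP k 2] (a1 a2 a3 c1 c2 c3 d1 d2 d3 : k)
    (v : Fin 6 → k) :
    (Matrix.of fun (i : Fin 3) (j : Fin 6) =>
      eval v (pderiv j
        (![Q1p k, Q2a k a1 a2 a3 c1 c2 c3 d1 d2 d3, Q3a k a1 a2 a3] i)))
      = Jmat a1 a2 a3 v := by
  have h2 : (2:k) = 0 := by
    have := CharP.cast_eq_zero k 2; exact_mod_cast this
  have e1 : ∀ j : Fin 6, eval v (pderiv j (Q1p k)) = ![v 3, v 4, v 5, v 0, v 1, v 2] j := by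
    intro j
    fin_cases j <;> simp [Q1p]
  have e2 : ∀ j : Fin 6, eval v (pderiv j (Q2a k a1 a2 a3 c1 c2 c3 d1 d2 d3))
      = ![a1 * v 3, a2 * v 4, a3 * v 5, a1 * v 0, a2 * v 1, a3 * v 2] j := by
    intro j
    fin_cases j <;> simp [Q2a, h2]
  have e3 : ∀ j : Fin 6, eval v (pderiv j (Q3a k a1 a2 a3))
      = ![a1 ^ 2 * v 3, a2 ^ 2 * v 4, a3 ^ 2 * v 5, a1 ^ 2 * v 0, a2 ^ 2 * v 1, a3 ^ 2 * v 2] j := by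
    intro j
    fin_cases j <;> simp [Q3a]
  ext i j
  fin_cases i <;> fin_cases j <;> simp [Jmat, e1, e2, e3]

lemma rank_le_two_factor' (M : Matrix (Fin 3) (Fin 6) k) (N : Matrix (Fin 3) (Fin 2) k)
    (P : Matrix (Fin 2) (Fin 6) k) (h : M = N * P) : M.rank ≤ 2 := by
  rw [h]
  refine (Matrix.rank_mul_le_left N P).trans ?_
  simpa using N.rank_le_card_width

lemma rank2_pair1 (a1 a2 a3 : k) (v : Fin 6 → k) (h0 : v 0 = 0) (h3 : v 3 = 0) :
    (Jmat a1 a2 a3 v).rank ≤ 2 := by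
  apply rank_le_two_factor' _ (Matrix.of ![![1,1],![a2,a3],![a2^2,a3^2]])
    (Matrix.of ![![0, v 4, 0, 0, v 1, 0], ![0, 0, v 5, 0, 0, v 2]])
  ext i j
  fin_cases i <;> fin_cases j <;>
    simp [Jmat, Matrix.mul_apply, Fin.sum_univ_succ, Matrix.cons_val_succ, h0, h3]

lemma rank2_pair2 (a1 a2 a3 : k) (v : Fin 6 → k) (h1 : v 1 = 0) (h4 : v 4 = 0) :
    (Jmat a1 a2 a3 v).rank ≤ 2 := by
  apply rank_le_two_factor' _ (Matrix.of ![![1,1],![a1,a3],![a1^2,a3^2]])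
    (Matrix.of ![![v 3, 0, 0, v 0, 0, 0], ![0, 0, v 5, 0, 0, v 2]])
  ext i j
  fin_cases i <;> fin_cases j <;>
    simp [Jmat, Matrix.mul_apply, Fin.sum_univ_succ, Matrix.cons_val_succ, h1, h4]

lemma rank2_pair3 (a1 a2 a3 : k) (v : Fin 6 → k) (h2 : v 2 = 0) (h5 : v 5 = 0) :
    (Jmat a1 a2 a3 v).rank ≤ 2 := by
  apply rank_le_two_factor' _ (Matrix.of ![![1,1],![a1,a2],![a1^2,a2^2]])
    (Matrix.of ![![v 3, 0, 0, v 0, 0, 0], ![0, v 4, 0, 0, v 1, 0]])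
  ext i j
  fin_cases i <;> fin_cases j <;>
    simp [Jmat, Matrix.mul_apply, Fin.sum_univ_succ, Matrix.cons_val_succ, h2, h5]

lemma rank_three (M : Matrix (Fin 3) (Fin 6) k) (x y z b1 b2 b3 : k) (j1 j2 j3 : Fin 6)
    (hx : x ≠ 0) (hy : y ≠ 0) (hz : z ≠ 0)
    (h12 : b1 ≠ b2) (h13 : b1 ≠ b3) (h23 : b2 ≠ b3)
    (hc1 : ∀ i : Fin 3, M i j1 = b1 ^ (i : ℕ) * x)
    (hc2 : ∀ i : Fin 3, M i j2 = b2 ^ (i : ℕ) * y)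
    (hc3 : ∀ i : Fin 3, M i j3 = b3 ^ (i : ℕ) * z) :
    3 ≤ M.rank := by
  set E : Matrix (Fin 6) (Fin 3) k :=
    Matrix.of fun t j => if t = ![j1, j2, j3] j then 1 else 0 with hE
  have hS : M * E = Matrix.of ![![x, y, z], ![b1*x, b2*y, b3*z], ![b1^2*x, b2^2*y, b3^2*z]] := by
    ext i j
    simp only [hE, Matrix.mul_apply, Matrix.of_apply, mul_ite, mul_one, mul_zero,
      Finset.sum_ite_eq', Finset.mem_univ, if_true]
    fin_cases j <;> fin_cases i <;>
      simp [Matrix.mul_apply, hE, mul_ite, mul_one, mul_zero, Finset.sum_ite_eq',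
        hc1, hc2, hc3]
  have hdet : (M * E).det = x * y * z * (b2 - b1) * (b3 - b1) * (b3 - b2) := by
    rw [hS, Matrix.det_fin_three]
    simp [Matrix.cons_val_succ]
    ring
  have hdet0 : IsUnit (M * E).det := by
    rw [hdet]
    exact (((((hx.isUnit.mul hy.isUnit).mul hz.isUnit).mul
      (sub_ne_zero.mpr h12.symm).isUnit).mul
      (sub_ne_zero.mpr h13.symm).isUnit).mul
      (sub_ne_zero.mpr h23.symm).isUnit)
  have h3 : (M * E).rank = 3 := by
    rw [Matrix.rank_of_isUnit _ ((Matrix.isUnit_iff_isUnit_det _).mpr hdet0)]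
    simp
  calc (3:ℕ) = (M * E).rank := h3.symm
    _ ≤ M.rank := Matrix.rank_mul_le_left M E

end Aux
theorem stmt_13 (k : Type*) [Field k] [IsAlgClosed k] [CharP k 2]
    (a1 a2 a3 c1 c2 c3 d1 d2 d3 : k)
    (h12 : a1 ≠ a2) (h13 : a1 ≠ a3) (h23 : a2 ≠ a3)
    (hc1 : c1 ≠ 0) (hc2 : c2 ≠ 0) (hc3 : c3 ≠ 0)
    (hd1 : d1 ≠ 0) (hd2 : d2 ≠ 0) (hd3 : d3 ≠ 0)
    (e1 e2 e3 f1 f2 f3 : k)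
    (he1 : e1 ^ 2 = d1) (he2 : e2 ^ 2 = d2) (he3 : e3 ^ 2 = d3)
    (hf1 : f1 ^ 2 = c1) (hf2 : f2 ^ 2 = c2) (hf3 : f3 ^ 2 = c3) :
    (∀ i : Fin 4, ∀ v ∈ ThetaSet k e1 e2 e3 f1 f2 f3 i,
      eval v (Q1p k) = 0 ∧ eval v (Q2a k a1 a2 a3 c1 c2 c3 d1 d2 d3) = 0 ∧
      eval v (Q3a k a1 a2 a3) = 0) ∧
    (∀ i : Fin 4, ∀ v ∈ ESet k e1 e2 e3 f1 f2 f3 i,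
      eval v (Q1p k) = 0 ∧ eval v (Q2a k a1 a2 a3 c1 c2 c3 d1 d2 d3) = 0 ∧
      eval v (Q3a k a1 a2 a3) = 0) ∧
    (∀ v : Fin 6 → k, v ≠ 0 →
      ((eval v (Q1p k) = 0 ∧ eval v (Q2a k a1 a2 a3 c1 c2 c3 d1 d2 d3) = 0 ∧
          eval v (Q3a k a1 a2 a3) = 0 ∧
          (Matrix.of fun (i : Fin 3) (j : Fin 6) =>
            eval v (pderiv j
              (![Q1p k, Q2a k a1 a2 a3 c1 c2 c3 d1 d2 d3, Q3a k a1 a2 a3] i))).rank ≤ 2)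
        ↔ ∃ i j : Fin 4, i ≠ j ∧ v ∈ ThetaSet k e1 e2 e3 f1 f2 f3 i ∧
            v ∈ ESet k e1 e2 e3 f1 f2 f3 j)) := by
  have htwo : (2:k) = 0 := by
    have := CharP.cast_eq_zero k 2; exact_mod_cast this
  have hQ1 : ∀ v : Fin 6 → k, eval v (Q1p k) = v 0 * v 3 + v 1 * v 4 + v 2 * v 5 := by
    intro v; simp [Q1p]
  have hQ2 : ∀ v : Fin 6 → k, eval v (Q2a k a1 a2 a3 c1 c2 c3 d1 d2 d3)
      = a1 * (v 0 * v 3) + a2 * (v 1 * v 4) + a3 * (v 2 * v 5)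
        + c1 * v 0 ^ 2 + c2 * v 1 ^ 2 + c3 * v 2 ^ 2
        + d1 * v 3 ^ 2 + d2 * v 4 ^ 2 + d3 * v 5 ^ 2 := by
    intro v; simp [Q2a]
  have hQ3 : ∀ v : Fin 6 → k, eval v (Q3a k a1 a2 a3)
      = a1 ^ 2 * (v 0 * v 3) + a2 ^ 2 * (v 1 * v 4) + a3 ^ 2 * (v 2 * v 5) := by
    intro v; simp [Q3a]
  have hsq : ∀ x y : k, x ≠ y → x ^ 2 - y ^ 2 ≠ 0 := by
    intro x y hxy hcon
    apply hxy
    have h0 : (x - y) ^ 2 = 0 := by linear_combination hcon + (y ^ 2 - x * y) * htwo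
    exact sub_eq_zero.mp ((pow_eq_zero_iff (two_ne_zero (α := ℕ))).mp h0)
  have partT : ∀ i : Fin 4, ∀ v ∈ ThetaSet k e1 e2 e3 f1 f2 f3 i,
      eval v (Q1p k) = 0 ∧ eval v (Q2a k a1 a2 a3 c1 c2 c3 d1 d2 d3) = 0 ∧
      eval v (Q3a k a1 a2 a3) = 0 := by
    intro i v hv
    fin_cases i
    · obtain ⟨hA, hB, hC, hD⟩ := hv
      refine ⟨by rw [hQ1, hA, hB, hC]; ring, ?_, by rw [hQ3, hA, hB, hC]; ring⟩
      rw [hQ2]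
      linear_combination (e1*v 3+e2*v 4+e3*v 5)*hD - v 3^2*he1 - v 4^2*he2 - v 5^2*he3
        - (e1*v 3*(e2*v 4)+e1*v 3*(e3*v 5)+e2*v 4*(e3*v 5))*htwo
        + (a1*v 3+c1*v 0)*hA + (a2*v 4+c2*v 1)*hB + (a3*v 5+c3*v 2)*hC
    · obtain ⟨hA, hB, hC, hD⟩ := hv
      refine ⟨by rw [hQ1, hA, hB, hC]; ring, ?_, by rw [hQ3, hA, hB, hC]; ring⟩
      rw [hQ2]
      linear_combination (f1*v 0+f2*v 1+e3*v 5)*hD - v 0^2*hf1 - v 1^2*hf2 - v 5^2*he3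
        - (f1*v 0*(f2*v 1)+f1*v 0*(e3*v 5)+f2*v 1*(e3*v 5))*htwo
        + (a1*v 0+d1*v 3)*hA + (a2*v 1+d2*v 4)*hB + (a3*v 5+c3*v 2)*hC
    · obtain ⟨hA, hB, hC, hD⟩ := hv
      refine ⟨by rw [hQ1, hA, hB, hC]; ring, ?_, by rw [hQ3, hA, hB, hC]; ring⟩
      rw [hQ2]
      linear_combination (f1*v 0+e2*v 4+f3*v 2)*hD - v 0^2*hf1 - v 4^2*he2 - v 2^2*hf3
        - (f1*v 0*(e2*v 4)+f1*v 0*(f3*v 2)+e2*v 4*(f3*v 2))*htwo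
        + (a1*v 0+d1*v 3)*hA + (a2*v 4+c2*v 1)*hB + (a3*v 2+d3*v 5)*hC
    · obtain ⟨hA, hB, hC, hD⟩ := hv
      refine ⟨by rw [hQ1, hA, hB, hC]; ring, ?_, by rw [hQ3, hA, hB, hC]; ring⟩
      rw [hQ2]
      linear_combination (e1*v 3+f2*v 1+f3*v 2)*hD - v 3^2*he1 - v 1^2*hf2 - v 2^2*hf3
        - (e1*v 3*(f2*v 1)+e1*v 3*(f3*v 2)+f2*v 1*(f3*v 2))*htwo
        + (a1*v 3+c1*v 0)*hA + (a2*v 1+d2*v 4)*hB + (a3*v 2+d3*v 5)*hC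
  have partE : ∀ i : Fin 4, ∀ v ∈ ESet k e1 e2 e3 f1 f2 f3 i,
      eval v (Q1p k) = 0 ∧ eval v (Q2a k a1 a2 a3 c1 c2 c3 d1 d2 d3) = 0 ∧
      eval v (Q3a k a1 a2 a3) = 0 := by
    intro i v hv
    fin_cases i
    · obtain ⟨hA, hB, hC, hD⟩ := hv
      refine ⟨by rw [hQ1, hA, hB, hC]; ring, ?_, by rw [hQ3, hA, hB, hC]; ring⟩
      rw [hQ2]
      linear_combination (f1*v 0+f2*v 1+f3*v 2)*hD - v 0^2*hf1 - v 1^2*hf2 - v 2^2*hf3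
        - (f1*v 0*(f2*v 1)+f1*v 0*(f3*v 2)+f2*v 1*(f3*v 2))*htwo
        + (a1*v 0+d1*v 3)*hA + (a2*v 1+d2*v 4)*hB + (a3*v 2+d3*v 5)*hC
    · obtain ⟨hA, hB, hC, hD⟩ := hv
      refine ⟨by rw [hQ1, hA, hB, hC]; ring, ?_, by rw [hQ3, hA, hB, hC]; ring⟩
      rw [hQ2]
      linear_combination (e1*v 3+e2*v 4+f3*v 2)*hD - v 3^2*he1 - v 4^2*he2 - v 2^2*hf3
        - (e1*v 3*(e2*v 4)+e1*v 3*(f3*v 2)+e2*v 4*(f3*v 2))*htwo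
        + (a1*v 3+c1*v 0)*hA + (a2*v 4+c2*v 1)*hB + (a3*v 2+d3*v 5)*hC
    · obtain ⟨hA, hB, hC, hD⟩ := hv
      refine ⟨by rw [hQ1, hA, hB, hC]; ring, ?_, by rw [hQ3, hA, hB, hC]; ring⟩
      rw [hQ2]
      linear_combination (e1*v 3+f2*v 1+e3*v 5)*hD - v 3^2*he1 - v 1^2*hf2 - v 5^2*he3
        - (e1*v 3*(f2*v 1)+e1*v 3*(e3*v 5)+f2*v 1*(e3*v 5))*htwo
        + (a1*v 3+c1*v 0)*hA + (a2*v 1+d2*v 4)*hB + (a3*v 5+c3*v 2)*hC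
    · obtain ⟨hA, hB, hC, hD⟩ := hv
      refine ⟨by rw [hQ1, hA, hB, hC]; ring, ?_, by rw [hQ3, hA, hB, hC]; ring⟩
      rw [hQ2]
      linear_combination (f1*v 0+e2*v 4+e3*v 5)*hD - v 0^2*hf1 - v 4^2*he2 - v 5^2*he3
        - (f1*v 0*(e2*v 4)+f1*v 0*(e3*v 5)+e2*v 4*(e3*v 5))*htwo
        + (a1*v 0+d1*v 3)*hA + (a2*v 4+c2*v 1)*hB + (a3*v 5+c3*v 2)*hC
  refine ⟨partT, partE, ?_⟩
  intro v hv0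
  constructor
  · rintro ⟨hq1, hq2, hq3, hrank⟩
    rw [jac_eq k a1 a2 a3 c1 c2 c3 d1 d2 d3 v] at hrank
    rw [hQ1 v] at hq1
    rw [hQ2 v] at hq2
    rw [hQ3 v] at hq3
    have hpair : (v 0 = 0 ∧ v 3 = 0) ∨ (v 1 = 0 ∧ v 4 = 0) ∨ (v 2 = 0 ∧ v 5 = 0) := by
      by_contra hcon
      push_neg at hcon
      obtain ⟨hA, hB, hC⟩ := hcon
      obtain ⟨j1, x, hx, hcol1⟩ : ∃ (j : Fin 6) (x : k), x ≠ 0 ∧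
          ∀ i : Fin 3, Jmat a1 a2 a3 v i j = a1 ^ (i:ℕ) * x := by
        rcases eq_or_ne (v 0) 0 with h | h
        · exact ⟨0, v 3, hA h, fun i => rfl⟩
        · exact ⟨3, v 0, h, fun i => rfl⟩
      obtain ⟨j2, y, hy, hcol2⟩ : ∃ (j : Fin 6) (y : k), y ≠ 0 ∧
          ∀ i : Fin 3, Jmat a1 a2 a3 v i j = a2 ^ (i:ℕ) * y := by
        rcases eq_or_ne (v 1) 0 with h | h
        · exact ⟨1, v 4, hB h, fun i => rfl⟩
        · exact ⟨4, v 1, h, fun i => rfl⟩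
      obtain ⟨j3, z, hz, hcol3⟩ : ∃ (j : Fin 6) (z : k), z ≠ 0 ∧
          ∀ i : Fin 3, Jmat a1 a2 a3 v i j = a3 ^ (i:ℕ) * z := by
        rcases eq_or_ne (v 2) 0 with h | h
        · exact ⟨2, v 5, hC h, fun i => rfl⟩
        · exact ⟨5, v 2, h, fun i => rfl⟩
      have := rank_three (Jmat a1 a2 a3 v) x y z a1 a2 a3 j1 j2 j3 hx hy hz h12 h13 h23
        hcol1 hcol2 hcol3
      omega
    rcases hpair with ⟨hz0, hz3⟩ | ⟨hz1, hz4⟩ | ⟨hz2, hz5⟩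
    · -- pair 1 vanishes
      have hP2 : v 1 * v 4 = 0 := by
        have hs : (a2 ^ 2 - a3 ^ 2) * (v 1 * v 4) = 0 := by
          linear_combination hq3 - a3 ^ 2 * hq1 + ((a3 ^ 2 - a1 ^ 2) * v 3) * hz0
        exact (mul_eq_zero.mp hs).resolve_left (hsq _ _ h23)
      have hP3 : v 2 * v 5 = 0 := by
        linear_combination hq1 - hP2 - v 3 * hz0
      have hL : (f2*v 1 + e2*v 4 + f3*v 2 + e3*v 5) ^ 2 = 0 := by
        linear_combination hq2 - (a1*v 3 + c1*v 0)*hz0 - d1*v 3*hz3 - a2*hP2 - a3*hP3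
          + v 1^2*hf2 + v 4^2*he2 + v 2^2*hf3 + v 5^2*he3
          + (f2*v 1*(e2*v 4)+f2*v 1*(f3*v 2)+f2*v 1*(e3*v 5)
            +e2*v 4*(f3*v 2)+e2*v 4*(e3*v 5)+f3*v 2*(e3*v 5))*htwo
      have hL0 : f2*v 1 + e2*v 4 + f3*v 2 + e3*v 5 = 0 :=
        (pow_eq_zero_iff (two_ne_zero (α := ℕ))).mp hL
      rcases mul_eq_zero.mp hP2 with h | h <;> rcases mul_eq_zero.mp hP3 with h' | h'
      · exact ⟨0, 3, by decide,
          ⟨hz0, h, h', by linear_combination hL0 + e1*hz3 - f2*h - f3*h'⟩,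
          ⟨hz3, h, h', by linear_combination hL0 + f1*hz0 - f2*h - f3*h'⟩⟩
      · exact ⟨2, 1, by decide,
          ⟨hz3, h, h', by linear_combination hL0 + f1*hz0 - f2*h - e3*h'⟩,
          ⟨hz0, h, h', by linear_combination hL0 + e1*hz3 - f2*h - e3*h'⟩⟩
      · exact ⟨1, 2, by decide,
          ⟨hz3, h, h', by linear_combination hL0 + f1*hz0 - e2*h - f3*h'⟩,
          ⟨hz0, h, h', by linear_combination hL0 + e1*hz3 - e2*h - f3*h'⟩⟩
      · exact ⟨3, 0, by decide,
          ⟨hz0, h, h', by linear_combination hL0 + e1*hz3 - e2*h - e3*h'⟩,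
          ⟨hz3, h, h', by linear_combination hL0 + f1*hz0 - e2*h - e3*h'⟩⟩
    · -- pair 2 vanishes
      have hP1 : v 0 * v 3 = 0 := by
        have hs : (a1 ^ 2 - a3 ^ 2) * (v 0 * v 3) = 0 := by
          linear_combination hq3 - a3 ^ 2 * hq1 + ((a3 ^ 2 - a2 ^ 2) * v 4) * hz1
        exact (mul_eq_zero.mp hs).resolve_left (hsq _ _ h13)
      have hP3 : v 2 * v 5 = 0 := by
        linear_combination hq1 - hP1 - v 4 * hz1
      have hL : (f1*v 0 + e1*v 3 + f3*v 2 + e3*v 5) ^ 2 = 0 := by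
        linear_combination hq2 - (a2*v 4 + c2*v 1)*hz1 - d2*v 4*hz4 - a1*hP1 - a3*hP3
          + v 0^2*hf1 + v 3^2*he1 + v 2^2*hf3 + v 5^2*he3
          + (f1*v 0*(e1*v 3)+f1*v 0*(f3*v 2)+f1*v 0*(e3*v 5)
            +e1*v 3*(f3*v 2)+e1*v 3*(e3*v 5)+f3*v 2*(e3*v 5))*htwo
      have hL0 : f1*v 0 + e1*v 3 + f3*v 2 + e3*v 5 = 0 :=
        (pow_eq_zero_iff (two_ne_zero (α := ℕ))).mp hL
      rcases mul_eq_zero.mp hP1 with h | h <;> rcases mul_eq_zero.mp hP3 with h' | h'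
      · exact ⟨0, 2, by decide,
          ⟨h, hz1, h', by linear_combination hL0 + e2*hz4 - f1*h - f3*h'⟩,
          ⟨h, hz4, h', by linear_combination hL0 + f2*hz1 - f1*h - f3*h'⟩⟩
      · exact ⟨3, 1, by decide,
          ⟨h, hz4, h', by linear_combination hL0 + f2*hz1 - f1*h - e3*h'⟩,
          ⟨h, hz1, h', by linear_combination hL0 + e2*hz4 - f1*h - e3*h'⟩⟩
      · exact ⟨1, 3, by decide,
          ⟨h, hz4, h', by linear_combination hL0 + f2*hz1 - e1*h - f3*h'⟩,
          ⟨h, hz1, h', by linear_combination hL0 + e2*hz4 - e1*h - f3*h'⟩⟩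
      · exact ⟨2, 0, by decide,
          ⟨h, hz1, h', by linear_combination hL0 + e2*hz4 - e1*h - e3*h'⟩,
          ⟨h, hz4, h', by linear_combination hL0 + f2*hz1 - e1*h - e3*h'⟩⟩
    · -- pair 3 vanishes
      have hP1 : v 0 * v 3 = 0 := by
        have hs : (a1 ^ 2 - a2 ^ 2) * (v 0 * v 3) = 0 := by
          linear_combination hq3 - a2 ^ 2 * hq1 + ((a2 ^ 2 - a3 ^ 2) * v 5) * hz2
        exact (mul_eq_zero.mp hs).resolve_left (hsq _ _ h12)
      have hP2 : v 1 * v 4 = 0 := by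
        linear_combination hq1 - hP1 - v 5 * hz2
      have hL : (f1*v 0 + e1*v 3 + f2*v 1 + e2*v 4) ^ 2 = 0 := by
        linear_combination hq2 - (a3*v 5 + c3*v 2)*hz2 - d3*v 5*hz5 - a1*hP1 - a2*hP2
          + v 0^2*hf1 + v 3^2*he1 + v 1^2*hf2 + v 4^2*he2
          + (f1*v 0*(e1*v 3)+f1*v 0*(f2*v 1)+f1*v 0*(e2*v 4)
            +e1*v 3*(f2*v 1)+e1*v 3*(e2*v 4)+f2*v 1*(e2*v 4))*htwo
      have hL0 : f1*v 0 + e1*v 3 + f2*v 1 + e2*v 4 = 0 :=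
        (pow_eq_zero_iff (two_ne_zero (α := ℕ))).mp hL
      rcases mul_eq_zero.mp hP1 with h | h <;> rcases mul_eq_zero.mp hP2 with h' | h'
      · exact ⟨0, 1, by decide,
          ⟨h, h', hz2, by linear_combination hL0 + e3*hz5 - f1*h - f2*h'⟩,
          ⟨h, h', hz5, by linear_combination hL0 + f3*hz2 - f1*h - f2*h'⟩⟩
      · exact ⟨3, 2, by decide,
          ⟨h, h', hz5, by linear_combination hL0 + f3*hz2 - f1*h - e2*h'⟩,
          ⟨h, h', hz2, by linear_combination hL0 + e3*hz5 - f1*h - e2*h'⟩⟩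
      · exact ⟨2, 3, by decide,
          ⟨h, h', hz5, by linear_combination hL0 + f3*hz2 - e1*h - f2*h'⟩,
          ⟨h, h', hz2, by linear_combination hL0 + e3*hz5 - e1*h - f2*h'⟩⟩
      · exact ⟨1, 0, by decide,
          ⟨h, h', hz2, by linear_combination hL0 + e3*hz5 - e1*h - e2*h'⟩,
          ⟨h, h', hz5, by linear_combination hL0 + f3*hz2 - e1*h - e2*h'⟩⟩
  · rintro ⟨i, j, hij, hvT, hvE⟩
    obtain ⟨g1, g2, g3⟩ := partT i v hvT
    refine ⟨g1, g2, g3, ?_⟩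
    rw [jac_eq k a1 a2 a3 c1 c2 c3 d1 d2 d3 v]
    fin_cases i <;> fin_cases j
    · exact absurd rfl hij
    · exact rank2_pair3 a1 a2 a3 v hvT.2.2.1 hvE.2.2.1
    · exact rank2_pair2 a1 a2 a3 v hvT.2.1 hvE.2.1
    · exact rank2_pair1 a1 a2 a3 v hvT.1 hvE.1
    · exact rank2_pair3 a1 a2 a3 v hvT.2.2.1 hvE.2.2.1
    · exact absurd rfl hij
    · exact rank2_pair1 a1 a2 a3 v hvE.1 hvT.1
    · exact rank2_pair2 a1 a2 a3 v hvE.2.1 hvT.2.1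
    · exact rank2_pair2 a1 a2 a3 v hvT.2.1 hvE.2.1
    · exact rank2_pair1 a1 a2 a3 v hvE.1 hvT.1
    · exact absurd rfl hij
    · exact rank2_pair3 a1 a2 a3 v hvE.2.2.1 hvT.2.2.1
    · exact rank2_pair1 a1 a2 a3 v hvT.1 hvE.1
    · exact rank2_pair2 a1 a2 a3 v hvE.2.1 hvT.2.1
    · exact rank2_pair3 a1 a2 a3 v hvE.2.2.1 hvT.2.2.1
    · exact absurd rfl hij
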